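/- Let A be symmetric positive definite n×n and 𝓑 an m×n matrix of full row rank, and consider the saddle-point matrix 𝔸 = [[A, 𝓑ᵀ],[𝓑, 0]]. If ℙ = blockdiag(A, S) with S = 𝓑A⁻¹𝓑ᵀ the exact Schur complement, then the eigenvalues of ℙ⁻¹𝔸 are exactly 1, (1+√5)/2, and (1−√5)/2. -/

import Mathlib

open Matrix

lemma aux_transpose_mulVec_ne_zero {n m : ℕ} (𝓑 : Matrix (Fin m) (Fin n) ℝ)
    (h𝓑 : 𝓑.rank = m) {v : Fin m → ℝ} (hv : v ≠ 0) : 𝓑ᵀ *ᵥ v ≠ 0 := by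
  have hrank : (𝓑ᵀ).rank = m := by rw [Matrix.rank_transpose]; exact h𝓑
  have h1 := LinearMap.finrank_range_add_finrank_ker (𝓑ᵀ).mulVecLin
  rw [Module.finrank_pi, Fintype.card_fin] at h1
  rw [Matrix.rank] at hrank
  have hker : Module.finrank ℝ (LinearMap.ker (𝓑ᵀ).mulVecLin) = 0 := by omega
  have hbot : LinearMap.ker (𝓑ᵀ).mulVecLin = ⊥ := Submodule.finrank_eq_zero.mp hker
  intro h0
  have : v ∈ LinearMap.ker (𝓑ᵀ).mulVecLin := by
    simpa [Matrix.mulVecLin_apply, Matrix.mulVec_transpose] using h0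
  rw [hbot, Submodule.mem_bot] at this
  exact hv this

lemma aux_exists_ker {n m : ℕ} (hnm : m < n) (𝓑 : Matrix (Fin m) (Fin n) ℝ)
    (h𝓑 : 𝓑.rank = m) : ∃ u : Fin n → ℝ, u ≠ 0 ∧ 𝓑 *ᵥ u = 0 := by
  have h1 := LinearMap.finrank_range_add_finrank_ker 𝓑.mulVecLin
  rw [Module.finrank_pi, Fintype.card_fin] at h1
  rw [Matrix.rank] at h𝓑
  have hker : 0 < Module.finrank ℝ (LinearMap.ker 𝓑.mulVecLin) := by omega
  have hbot : LinearMap.ker 𝓑.mulVecLin ≠ ⊥ := by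
    intro h
    rw [h] at hker
    simp at hker
  obtain ⟨u, huK, hu0⟩ := Submodule.exists_mem_ne_zero_of_ne_bot hbot
  exact ⟨u, hu0, by simpa [Matrix.mulVecLin_apply] using huK⟩

lemma aux_schur_posDef {n m : ℕ} (A : Matrix (Fin n) (Fin n) ℝ) (hA : A.PosDef)
    (𝓑 : Matrix (Fin m) (Fin n) ℝ) (h𝓑 : 𝓑.rank = m) :
    (𝓑 * A⁻¹ * 𝓑ᵀ).PosDef := by
  have hAinv := hA.inv
  rw [Matrix.posDef_iff_dotProduct_mulVec]
  constructor
  · have h := Matrix.isHermitian_mul_mul_conjTranspose 𝓑 hAinv.isHermitian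
    rw [Matrix.conjTranspose_eq_transpose_of_trivial] at h
    exact h
  · intro x hx
    have hkey : (𝓑 * A⁻¹ * 𝓑ᵀ) *ᵥ x = 𝓑 *ᵥ (A⁻¹ *ᵥ (𝓑ᵀ *ᵥ x)) := by
      rw [Matrix.mulVec_mulVec, Matrix.mulVec_mulVec]
    rw [hkey]
    have h0 : 𝓑ᵀ *ᵥ x ≠ 0 := aux_transpose_mulVec_ne_zero 𝓑 h𝓑 hx
    have := hAinv.dotProduct_mulVec_pos h0
    simpa [Matrix.dotProduct_mulVec, Matrix.mulVec_transpose] using this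

lemma aux_eig_iff {k : Type*} [Fintype k] [DecidableEq k] {P : Matrix k k ℝ}
    (M : Matrix k k ℝ) (hP : IsUnit P.det) (ρ : ℝ) (x : k → ℝ) :
    (P⁻¹ * M) *ᵥ x = ρ • x ↔ M *ᵥ x = ρ • (P *ᵥ x) := by
  constructor
  · intro h
    calc M *ᵥ x = ((P * P⁻¹) * M) *ᵥ x := by
          rw [Matrix.mul_nonsing_inv _ hP, Matrix.one_mul]
      _ = P *ᵥ ((P⁻¹ * M) *ᵥ x) := by rw [Matrix.mulVec_mulVec, Matrix.mul_assoc]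
      _ = P *ᵥ (ρ • x) := by rw [h]
      _ = ρ • (P *ᵥ x) := Matrix.mulVec_smul _ _ _
  · intro h
    calc (P⁻¹ * M) *ᵥ x = P⁻¹ *ᵥ (M *ᵥ x) := (Matrix.mulVec_mulVec _ _ _).symm
      _ = P⁻¹ *ᵥ (ρ • (P *ᵥ x)) := by rw [h]
      _ = ρ • ((P⁻¹ * P) *ᵥ x) := by rw [Matrix.mulVec_smul, Matrix.mulVec_mulVec]
      _ = ρ • x := by rw [Matrix.nonsing_inv_mul _ hP, Matrix.one_mulVec]

lemma aux_smul_elim {n m : ℕ} (ρ : ℝ) (Z : Fin n → ℝ) (W : Fin m → ℝ) :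
    ρ • Sum.elim Z W = Sum.elim (ρ • Z) (ρ • W) := by
  funext i
  cases i <;> rfl

/-- Ideal block-diagonal preconditioning: with the exact Schur complement
`S = 𝓑A⁻¹𝓑ᵀ`, the eigenvalues of `ℙ⁻¹𝔸` are exactly `1`, `(1+√5)/2`, and
`(1−√5)/2` (with `n > m ≥ 1`). -/
theorem ideal_schur_preconditioner_eigenvalues
    {n m : ℕ} (hm : 0 < m) (hnm : m < n)
    (A : Matrix (Fin n) (Fin n) ℝ) (hA : A.PosDef)
    (𝓑 : Matrix (Fin m) (Fin n) ℝ) (h𝓑 : 𝓑.rank = m) :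
    {ρ : ℝ | ∃ x : Fin n ⊕ Fin m → ℝ, x ≠ 0 ∧
        ((fromBlocks A 0 0 (𝓑 * A⁻¹ * 𝓑ᵀ))⁻¹ * fromBlocks A 𝓑ᵀ 𝓑 0).mulVec x
          = ρ • x} =
      {1, (1 + Real.sqrt 5) / 2, (1 - Real.sqrt 5) / 2} := by
  have hAd : IsUnit A.det := (Matrix.isUnit_iff_isUnit_det A).mp hA.isUnit
  set S := 𝓑 * A⁻¹ * 𝓑ᵀ with hSdef
  have hS : S.PosDef := aux_schur_posDef A hA 𝓑 h𝓑
  have hSd : IsUnit S.det := (Matrix.isUnit_iff_isUnit_det S).mp hS.isUnit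
  have hPd : IsUnit (fromBlocks A 0 0 S).det := by
    rw [Matrix.det_fromBlocks_zero₂₁]
    exact hAd.mul hSd
  have h5 : Real.sqrt 5 ^ 2 = 5 := Real.sq_sqrt (by norm_num)
  -- membership of the quadratic roots
  have key : ∀ ρ : ℝ, ρ * ρ = ρ + 1 →
      ∃ x : Fin n ⊕ Fin m → ℝ, x ≠ 0 ∧
        ((fromBlocks A 0 0 S)⁻¹ * fromBlocks A 𝓑ᵀ 𝓑 0) *ᵥ x = ρ • x := by
    intro ρ hρ
    have hρ1 : ρ - 1 ≠ 0 := by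
      intro h
      have : ρ = 1 := by linarith
      rw [this] at hρ
      norm_num at hρ
    set v : Fin m → ℝ := fun _ => 1 with hvdef
    have hvne : v ≠ 0 := by
      intro h
      have := congrFun h ⟨0, hm⟩
      simp [hvdef] at this
    set u : Fin n → ℝ := (ρ - 1)⁻¹ • (A⁻¹ *ᵥ (𝓑ᵀ *ᵥ v)) with hudef
    have hAu : A *ᵥ u = (ρ - 1)⁻¹ • (𝓑ᵀ *ᵥ v) := by
      rw [hudef, Matrix.mulVec_smul, Matrix.mulVec_mulVec,
        Matrix.mul_nonsing_inv _ hAd, Matrix.one_mulVec]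
    have hBu : 𝓑 *ᵥ u = (ρ - 1)⁻¹ • (S *ᵥ v) := by
      rw [hudef, Matrix.mulVec_smul, Matrix.mulVec_mulVec, Matrix.mulVec_mulVec, hSdef]
    have e1 : A *ᵥ u + 𝓑ᵀ *ᵥ v = ρ • (A *ᵥ u) := by
      rw [hAu]
      have hs : (ρ - 1)⁻¹ + 1 = ρ * (ρ - 1)⁻¹ := by
        field_simp
        ring
      calc (ρ - 1)⁻¹ • (𝓑ᵀ *ᵥ v) + 𝓑ᵀ *ᵥ v
          = ((ρ - 1)⁻¹ + 1) • (𝓑ᵀ *ᵥ v) := by rw [add_smul, one_smul]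
        _ = (ρ * (ρ - 1)⁻¹) • (𝓑ᵀ *ᵥ v) := by rw [hs]
        _ = ρ • ((ρ - 1)⁻¹ • (𝓑ᵀ *ᵥ v)) := by rw [mul_smul]
    have e2 : 𝓑 *ᵥ u = ρ • (S *ᵥ v) := by
      rw [hBu]
      have hs : (ρ - 1)⁻¹ = ρ := by
        field_simp
        nlinarith [hρ]
      rw [hs]
    refine ⟨Sum.elim u v, ?_, ?_⟩
    · intro h
      apply hvne
      funext i
      exact congrFun h (Sum.inr i)
    · rw [aux_eig_iff _ hPd, Matrix.fromBlocks_mulVec, Matrix.fromBlocks_mulVec]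
      simp only [Sum.elim_comp_inl, Sum.elim_comp_inr, Matrix.zero_mulVec,
        Matrix.mulVec_zero, add_zero, zero_add]
      rw [e1, e2, aux_smul_elim]
  ext ρ
  simp only [Set.mem_setOf_eq, Set.mem_insert_iff, Set.mem_singleton_iff]
  constructor
  · rintro ⟨x, hx0, hx⟩
    rw [aux_eig_iff _ hPd, Matrix.fromBlocks_mulVec, Matrix.fromBlocks_mulVec] at hx
    set u := x ∘ Sum.inl with hu
    set v := x ∘ Sum.inr with hv
    simp only [Matrix.zero_mulVec, Matrix.mulVec_zero, add_zero, zero_add,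
      aux_smul_elim] at hx
    have h1 : A *ᵥ u + 𝓑ᵀ *ᵥ v = ρ • (A *ᵥ u) := by
      have := congrArg (· ∘ Sum.inl) hx
      simpa using this
    have h2 : 𝓑 *ᵥ u = ρ • (S *ᵥ v) := by
      have := congrArg (· ∘ Sum.inr) hx
      simpa using this
    by_cases hρ1 : ρ = 1
    · exact Or.inl hρ1
    · have hvne : v ≠ 0 := by
        intro hv0
        rw [hv0, Matrix.mulVec_zero, add_zero] at h1
        have hAu : A *ᵥ u = 0 := by
          have h' : (ρ - 1) • (A *ᵥ u) = 0 := by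
            rw [sub_smul, one_smul, ← h1, sub_self]
          rcases smul_eq_zero.mp h' with h | h
          · exact absurd (by linarith [sub_eq_zero.mp h] : ρ = 1) hρ1
          · exact h
        have hu0 : u = 0 := by
          have hinj : Function.Injective A.mulVec :=
            Matrix.mulVec_injective_iff_isUnit.mpr hA.isUnit
          exact hinj (by rw [hAu, Matrix.mulVec_zero])
        apply hx0
        funext i
        cases i with
        | inl i => exact congrFun hu0 i
        | inr i => exact congrFun hv0 i
      have hBv : 𝓑ᵀ *ᵥ v = (ρ - 1) • (A *ᵥ u) := by
        rw [sub_smul, one_smul, ← h1]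
        abel
      have hSv : S *ᵥ v = (ρ - 1) • (𝓑 *ᵥ u) := by
        have hrw : S *ᵥ v = 𝓑 *ᵥ (A⁻¹ *ᵥ (𝓑ᵀ *ᵥ v)) := by
          rw [Matrix.mulVec_mulVec, Matrix.mulVec_mulVec]
        rw [hrw, hBv, Matrix.mulVec_smul, Matrix.mulVec_smul, Matrix.mulVec_mulVec,
          Matrix.mulVec_mulVec, Matrix.mul_assoc, Matrix.nonsing_inv_mul _ hAd,
          Matrix.mul_one]
      have hSvne : S *ᵥ v ≠ 0 := by
        intro h
        apply hvne
        have hinj : Function.Injective S.mulVec :=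
          Matrix.mulVec_injective_iff_isUnit.mpr hS.isUnit
        exact hinj (by rw [h, Matrix.mulVec_zero])
      have h3 : S *ᵥ v = ((ρ - 1) * ρ) • (S *ᵥ v) := by
        rw [mul_smul, ← h2, hSv]
      have hquad : (ρ - 1) * ρ = 1 := by
        by_contra hne
        have h4 : (1 - (ρ - 1) * ρ) • (S *ᵥ v) = 0 := by
          rw [sub_smul, one_smul, sub_eq_zero]
          exact h3
        rcases smul_eq_zero.mp h4 with h | h
        · exact hne (by linarith [sub_eq_zero.mp h])
        · exact hSvne h
      have hfac : (ρ - (1 + Real.sqrt 5) / 2) * (ρ - (1 - Real.sqrt 5) / 2) = 0 := by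
        nlinarith [h5, hquad]
      rcases mul_eq_zero.mp hfac with h | h
      · exact Or.inr (Or.inl (by linarith [sub_eq_zero.mp h]))
      · exact Or.inr (Or.inr (by linarith [sub_eq_zero.mp h]))
  · rintro (rfl | rfl | rfl)
    · obtain ⟨u, hu0, huB⟩ := aux_exists_ker hnm 𝓑 h𝓑
      refine ⟨Sum.elim u 0, ?_, ?_⟩
      · intro h
        apply hu0
        funext i
        exact congrFun h (Sum.inl i)
      · rw [aux_eig_iff _ hPd, Matrix.fromBlocks_mulVec, Matrix.fromBlocks_mulVec]
        simp only [Sum.elim_comp_inl, Sum.elim_comp_inr, Matrix.zero_mulVec,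
          Matrix.mulVec_zero, add_zero, zero_add, huB, one_smul, aux_smul_elim]
    · exact key _ (by nlinarith [h5])
    · exact key _ (by nlinarith [h5])
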